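/- arXiv:1604.02471 — 2 statements merged into one kernel-verified Lean document; each statement's English description precedes it below -/
import Mathlib

section
/- Let n ≥ 2 and 1 ≤ p ≤ n. Then C_{p,0}^{(n)} = (−1)^{p−1}. (This is the base case of the induction in the proof of Claim 3.8.) -/
noncomputable section

open Finset PowerSeries

/-- Binomial coefficient `binom b a` with integer arguments,
zero when `a < 0` or `b < a`. -/
def ibinom (b a : ℤ) : ℤ := if a < 0 ∨ b < a then 0 else (b.toNat.choose a.toNat : ℤ)

/-- One-norm `‖μ‖` of an integer vector. -/
def onenorm {n : ℕ} (μ : Fin n → ℤ) : ℕ := ∑ i, (μ i).natAbs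

/-- `Z(μ)`: number of zero coordinates. -/
def zcount {n : ℕ} (μ : Fin n → ℤ) : ℕ := (univ.filter fun i => μ i = 0).card

/-- `N_𝓛(k, ℓ)`. -/
def Ncard {n : ℕ} (L : Set (Fin n → ℤ)) (k ℓ : ℕ) : ℕ :=
  {μ : Fin n → ℤ | μ ∈ L ∧ onenorm μ = k ∧ zcount μ = ℓ}.ncard

/-- `N_𝓛(k)`. -/
def NcardTot {n : ℕ} (L : Set (Fin n → ℤ)) (k : ℕ) : ℕ :=
  {μ : Fin n → ℤ | μ ∈ L ∧ onenorm μ = k}.ncard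

/-- `ϑ_𝓛^{(ℓ)}(z) = Σ_{k≥0} N_𝓛(k,ℓ) z^k`. -/
def thetaL {n : ℕ} (L : Set (Fin n → ℤ)) (ℓ : ℕ) : PowerSeries ℤ :=
  PowerSeries.mk fun k => (Ncard L k ℓ : ℤ)

/-- `ϑ_𝓛(z) = Σ_{k≥0} N_𝓛(k) z^k`. -/
def thetaTot {n : ℕ} (L : Set (Fin n → ℤ)) : PowerSeries ℤ :=
  PowerSeries.mk fun k => (NcardTot L k : ℤ)

/-- `N_𝓛^red(k,ℓ)`, counting elements of `C(q) ∩ 𝓛`. -/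
def NcardRed {n : ℕ} (L : Set (Fin n → ℤ)) (q k ℓ : ℕ) : ℕ :=
  {μ : Fin n → ℤ | (∀ i, |μ i| < (q : ℤ)) ∧ μ ∈ L ∧ onenorm μ = k ∧ zcount μ = ℓ}.ncard

/-- `Φ_𝓛^{(ℓ)}(z) = Σ_{k≥0} N_𝓛^red(k,ℓ) z^k`. -/
def PhiL {n : ℕ} (L : Set (Fin n → ℤ)) (q ℓ : ℕ) : PowerSeries ℤ :=
  PowerSeries.mk fun k => (NcardRed L q k ℓ : ℤ)

/-- `𝓛` is `q`-periodic: `μ ∈ 𝓛 ↔ μ + qν ∈ 𝓛`. -/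
def qPeriodic {n : ℕ} (q : ℕ) (L : Set (Fin n → ℤ)) : Prop :=
  ∀ μ ν : Fin n → ℤ, μ ∈ L ↔ (μ + (q : ℤ) • ν) ∈ L

/-- `M_𝓛(k,p)`. -/
def Mcoef {n : ℕ} (L : Set (Fin n → ℤ)) (k p : ℕ) : ℤ :=
  ∑ ℓ ∈ range (n+1), ∑ r ∈ range ((k-1+p)/2 + 1),
    (Ncard L (k-1+p-2*r) ℓ : ℤ) *
    ∑ j ∈ Icc 1 p, (-1 : ℤ)^(j-1) *
      ∑ t ∈ range ((p-j)/2 + 1), ibinom ((n : ℤ) - p + j + 2*t) t *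
        ∑ β ∈ range (p-j-2*t+1),
          2^(p-j-2*t-β) * ibinom ((n : ℤ) - ℓ) β * ibinom (ℓ : ℤ) ((p-j-2*t-β : ℕ)) *
          ∑ α ∈ range (β+1), ibinom (β : ℤ) α *
            ∑ i ∈ range j, ibinom ((r : ℤ) - i - p + j + α + t + n - 2) ((n : ℤ) - 2)

/-- `Ã_p^{(ℓ)}(z) = z^p A_p^{(ℓ)}(z)`. -/
def Atilde (n p ℓ : ℕ) : PowerSeries ℤ :=
  ∑ j ∈ Icc 1 p, C (R := ℤ) ((-1 : ℤ)^(j-1)) *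
    ∑ t ∈ range ((p-j)/2 + 1), C (R := ℤ) (ibinom ((n : ℤ) - p + j + 2*t) t) *
      ∑ β ∈ range (p-j-2*t+1),
        C (R := ℤ) (2^(p-j-2*t-β) * ibinom ((n : ℤ) - ℓ) β * ibinom (ℓ : ℤ) ((p-j-2*t-β : ℕ))) *
        ∑ α ∈ range (β+1), C (R := ℤ) (ibinom (β : ℤ) α) *
          ∑ i ∈ range j, (X : PowerSeries ℤ)^(2*p - 2*(j+t+α-i))

/-- `Υ_m^{(ℓ)}(z)`; zero when `m < 0`. -/
def Upsilon {n : ℕ} (L : Set (Fin n → ℤ)) (m : ℤ) (ℓ : ℕ) : PowerSeries ℤ :=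
  if m < 0 then 0 else
    ∑ h ∈ range (m.toNat + 1),
      C (R := ℤ) (∑ s ∈ range (h/2 + 1), (Ncard L (h - 2*s) ℓ : ℤ) * ((s + n - 2).choose (n-2) : ℤ)) *
        (X : PowerSeries ℤ)^h

/-- `B̃_{𝓛,p}^{(ℓ)}(z) = z^p B_{𝓛,p}^{(ℓ)}(z)`. -/
def Btilde {n : ℕ} (L : Set (Fin n → ℤ)) (p ℓ : ℕ) : PowerSeries ℤ :=
  ∑ j ∈ Icc 1 p, C (R := ℤ) ((-1 : ℤ)^(j-1)) *
    ∑ t ∈ range ((p-j)/2 + 1), C (R := ℤ) (ibinom ((n : ℤ) - p + j + 2*t) t) *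
      ∑ β ∈ range (p-j-2*t+1),
        C (R := ℤ) (2^(p-j-2*t-β) * ibinom ((n : ℤ) - ℓ) β * ibinom (ℓ : ℤ) ((p-j-2*t-β : ℕ))) *
        ∑ α ∈ range (β+1), C (R := ℤ) (ibinom (β : ℤ) α) *
          ∑ i ∈ range j,
            (X : PowerSeries ℤ)^(2*p - 2*(j+t+α-i)) *
              Upsilon L (2*((j : ℤ) + t + α - i) - p - 1) ℓ

/-- `C_{p,g}^{(ℓ)}`. -/
def Cpg (n p g ℓ : ℕ) : ℤ :=
  ∑ j ∈ Icc 1 p, (-1 : ℤ)^(j-1) *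
    ∑ t ∈ range ((p-j)/2 + 1), ibinom ((n : ℤ) - p + j + 2*t) t *
      ∑ β ∈ range (p-j-2*t+1),
        2^(p-j-2*t-β) * ibinom ((n : ℤ) - ℓ) β * ibinom (ℓ : ℤ) ((p-j-2*t-β : ℕ)) *
        ∑ i ∈ range j, ibinom (β : ℤ) ((p : ℤ) + i - j - t - g)


lemma ibinom_zero_left (a : ℤ) : ibinom 0 a = if a = 0 then 1 else 0 := by
  unfold ibinom
  rcases lt_trichotomy a 0 with h|h|h
  · simp [h, h.ne]
  · simp [h]
  · rw [if_pos (Or.inr h), if_neg h.ne']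

lemma ibinom_nat_zero (b : ℕ) : ibinom (b : ℤ) 0 = 1 := by
  unfold ibinom
  simp

/-- base case of Claim 3.8: `C_{p,0}^{(n)} = (-1)^{p-1}`. -/
theorem stmt12 {n p : ℕ} (hn : 2 ≤ n) (hp1 : 1 ≤ p) (hpn : p ≤ n) :
    Cpg n p 0 n = (-1 : ℤ)^(p-1) := by
  unfold Cpg
  rw [Finset.sum_eq_single p]
  · have h1 : (p - p)/2 + 1 = 1 := by omega
    rw [h1, Finset.sum_range_one]
    have h2 : p - p - 2*0 + 1 = 1 := by omega
    rw [h2, Finset.sum_range_one]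
    have h3 : ((n : ℤ) - p + p + 2*(0:ℕ)) = (n : ℤ) := by push_cast; ring
    have h4 : ((n : ℤ) - n) = ((0:ℕ) : ℤ) := by push_cast; ring
    rw [h3, h4]
    have h5 : p - p - 2*0 - 0 = 0 := by omega
    rw [h5]
    have h6 : ∑ i ∈ range p, ibinom ((0:ℕ) : ℤ) ((p : ℤ) + i - p - (0:ℕ) - (0:ℕ)) = 1 := by
      rw [Finset.sum_eq_single 0]
      · norm_num [ibinom_zero_left]
      · intro i _ hi
        have : ((p : ℤ) + i - p - (0:ℕ) - (0:ℕ)) = (i : ℤ) := by push_cast; ring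
        rw [this]
        simp only [Nat.cast_zero]
        rw [ibinom_zero_left, if_neg (by exact_mod_cast hi)]
      · intro h; exact absurd (Finset.mem_range.mpr hp1) h
    rw [h6]
    simp only [Nat.cast_zero]
    simp [ibinom_zero_left, ibinom_nat_zero]
  · intro j hj hjp
    rw [Finset.mem_Icc] at hj
    have hjlt : j < p := lt_of_le_of_ne hj.2 hjp
    have hz : (∑ t ∈ range ((p-j)/2 + 1), ibinom ((n : ℤ) - p + j + 2*t) t *
      ∑ β ∈ range (p-j-2*t+1),
        2^(p-j-2*t-β) * ibinom ((n : ℤ) - n) β * ibinom (n : ℤ) ((p-j-2*t-β : ℕ)) *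
        ∑ i ∈ range j, ibinom (β : ℤ) ((p : ℤ) + i - j - t - (0:ℕ))) = 0 := by
      apply Finset.sum_eq_zero
      intro t ht
      rw [Finset.mem_range] at ht
      have htle : t ≤ (p-j)/2 := by omega
      have hjt : t + j < p := by omega
      have hβ : (∑ β ∈ range (p-j-2*t+1),
          2^(p-j-2*t-β) * ibinom ((n : ℤ) - n) β * ibinom (n : ℤ) ((p-j-2*t-β : ℕ)) *
          ∑ i ∈ range j, ibinom (β : ℤ) ((p : ℤ) + i - j - t - (0:ℕ))) = 0 := by
        apply Finset.sum_eq_zero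
        intro β _
        rcases Nat.eq_zero_or_pos β with hβ0 | hβpos
        · subst hβ0
          have : (∑ i ∈ range j, ibinom ((0:ℕ) : ℤ) ((p : ℤ) + i - j - t - (0:ℕ))) = 0 := by
            apply Finset.sum_eq_zero
            intro i _
            simp only [Nat.cast_zero]
            rw [ibinom_zero_left, if_neg]
            push_cast
            omega
          rw [this, mul_zero]
        · have : ((n : ℤ) - n) = ((0:ℕ) : ℤ) := by push_cast; ring
          rw [this]
          simp only [Nat.cast_zero]
          rw [ibinom_zero_left, if_neg (by exact_mod_cast hβpos.ne')]
          ring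
      rw [hβ, mul_zero]
    rw [hz, mul_zero]
  · intro h; exact absurd (Finset.mem_Icc.mpr ⟨hp1, le_refl p⟩) h
end
end

section
/- Let n ≥ 2, let 𝓛 be any subset of ℤⁿ, and let 1 ≤ p ≤ n. Then Σ_{ℓ=0}^{n} B̃_{𝓛,p}^{(ℓ)}(z) = Σ_{g=0}^{⌊(p−1)/2⌋} z^{2g} Σ_{ℓ=n+1+2g−p}^{n} Υ_{p−1−2g}^{(ℓ)}(z) · C_{p,g}^{(ℓ)}. (This is identity (3.7) in the proof of Theorem 2.2; it uses that Υ_m^{(ℓ)}(z) = 0 whenever m < 0 or n−ℓ > m, since N_𝓛(k,ℓ) = 0 for k < n−ℓ.) -/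
noncomputable section

open Finset PowerSeries

lemma Ncard_eq_zero {n : ℕ} (L : Set (Fin n → ℤ)) {k ℓ : ℕ} (h : k + ℓ < n) :
    Ncard L k ℓ = 0 := by
  rw [Ncard]
  have he : {μ : Fin n → ℤ | μ ∈ L ∧ onenorm μ = k ∧ zcount μ = ℓ} = ∅ := by
    rw [Set.eq_empty_iff_forall_notMem]
    rintro μ ⟨-, hk, hl⟩
    have h1 : (univ.filter fun i => μ i = 0).card + (univ.filter fun i => ¬ μ i = 0).card
        = n := by
      rw [Finset.card_filter_add_card_filter_not]
      simp
    have h2 : (univ.filter fun i => ¬ μ i = 0).card ≤ onenorm μ := by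
      rw [onenorm]
      calc (univ.filter fun i => ¬ μ i = 0).card
          = ∑ i ∈ univ.filter fun i => ¬ μ i = 0, 1 := by simp
        _ ≤ ∑ i ∈ univ.filter fun i => ¬ μ i = 0, (μ i).natAbs := by
            refine Finset.sum_le_sum fun i hi => ?_
            have := (Finset.mem_filter.mp hi).2
            omega
        _ ≤ ∑ i, (μ i).natAbs := Finset.sum_le_sum_of_subset (Finset.filter_subset _ _)
    rw [hk] at h2
    rw [zcount] at hl
    omega
  rw [he, Set.ncard_empty]

lemma Upsilon_eq_zero {n : ℕ} (L : Set (Fin n → ℤ)) {m : ℤ} {ℓ : ℕ}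
    (h : m < (n : ℤ) - ℓ) : Upsilon L m ℓ = 0 := by
  rw [Upsilon]
  split_ifs with hm
  · rfl
  push_neg at hm
  refine Finset.sum_eq_zero fun h' hh' => ?_
  have hh'' : h' ≤ m.toNat := by simpa [Nat.lt_succ_iff] using hh'
  have hcoef : (∑ s ∈ range (h'/2 + 1),
      (Ncard L (h' - 2*s) ℓ : ℤ) * ((s + n - 2).choose (n-2) : ℤ)) = 0 := by
    refine Finset.sum_eq_zero fun s _ => ?_
    rw [Ncard_eq_zero L (by omega)]
    simp
  rw [hcoef, map_zero, zero_mul]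

lemma pull {M : Type*} [CommRing M] (s t : Finset ℕ) (u a : ℕ → M) (f : ℕ → ℕ → M) :
    ∑ g ∈ s, u g * ∑ j ∈ t, a j * f j g = ∑ j ∈ t, a j * ∑ g ∈ s, u g * f j g := by
  simp only [Finset.mul_sum]
  rw [Finset.sum_comm]
  exact Finset.sum_congr rfl fun j _ => Finset.sum_congr rfl fun g _ => mul_left_comm _ _ _

lemma inj_core {n : ℕ} (L : Set (Fin n → ℤ)) {p j t β i ℓ : ℕ}
    (hj1 : 1 ≤ j) (hjp : j ≤ p) (ht : 2*t ≤ p - j) (hβ : β ≤ p - j - 2*t) (hi : i < j) :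
    ∑ g ∈ range p, ((X : PowerSeries ℤ)^(2*g) * Upsilon L ((p:ℤ)-1-2*g) ℓ) *
        C (R := ℤ) (ibinom (β:ℤ) ((p:ℤ)+i-j-t-g))
    = ∑ α ∈ range (β+1), C (R := ℤ) (ibinom (β:ℤ) α) *
        ((X : PowerSeries ℤ)^(2*p-2*(j+t+α-i)) * Upsilon L (2*((j:ℤ)+t+α-i)-p-1) ℓ) := by
  have hkey : j + 2*t + β ≤ p := by omega
  symm
  refine Finset.sum_of_injOn (fun α => p + i - j - t - α) ?_ ?_ ?_ ?_
  · intro a ha b hb hab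
    simp only [Finset.coe_range, Set.mem_Iio] at ha hb
    simp only at hab
    omega
  · intro a ha
    simp only [Finset.coe_range, Set.mem_Iio] at ha ⊢
    omega
  · intro g hg hgim
    have hcond : ((p:ℤ)+i-j-t-g < 0 ∨ (β:ℤ) < (p:ℤ)+i-j-t-g) := by
      by_contra hne
      push_neg at hne
      refine hgim ⟨((p:ℤ)+i-j-t-g).toNat, ?_, ?_⟩
      · simp only [Finset.coe_range, Set.mem_Iio]; omega
      · show p + i - j - t - ((p:ℤ)+i-j-t-g).toNat = g
        omega
    rw [show ibinom (β:ℤ) ((p:ℤ)+i-j-t-g) = 0 from by rw [ibinom, if_pos hcond],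
      map_zero, mul_zero]
  · intro α hα
    simp only [Finset.mem_range] at hα
    beta_reduce
    rw [show 2*(p+i-j-t-α) = 2*p-2*(j+t+α-i) from by omega,
      show ((p:ℤ)-1-2*(↑(p + i - j - t - α) : ℤ)) = 2*((j:ℤ)+t+α-i)-p-1 from by omega,
      show ((p:ℤ)+↑i-↑j-↑t-(↑(p + i - j - t - α) : ℤ)) = (α:ℤ) from by omega]
    ring

lemma innermost {n : ℕ} (L : Set (Fin n → ℤ)) {p j t β ℓ : ℕ}
    (hj1 : 1 ≤ j) (hjp : j ≤ p) (ht : 2*t ≤ p - j) (hβ : β ≤ p - j - 2*t) :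
    ∑ g ∈ range p, ((X : PowerSeries ℤ)^(2*g) * Upsilon L ((p:ℤ)-1-2*g) ℓ) *
        ∑ i ∈ range j, C (R := ℤ) (ibinom (β:ℤ) ((p:ℤ)+i-j-t-g))
    = ∑ α ∈ range (β+1), C (R := ℤ) (ibinom (β:ℤ) α) *
        ∑ i ∈ range j, (X : PowerSeries ℤ)^(2*p-2*(j+t+α-i)) *
          Upsilon L (2*((j:ℤ)+t+α-i)-p-1) ℓ := by
  simp only [Finset.mul_sum]
  rw [Finset.sum_comm]
  conv_rhs => rw [Finset.sum_comm]
  exact Finset.sum_congr rfl fun i hi =>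
    inj_core L hj1 hjp ht hβ (Finset.mem_range.mp hi)

lemma stepD {n : ℕ} (L : Set (Fin n → ℤ)) {p ℓ : ℕ} :
    ∑ g ∈ range p, (X : PowerSeries ℤ)^(2*g) *
      (Upsilon L ((p:ℤ)-1-2*g) ℓ * C (R := ℤ) (Cpg n p g ℓ)) = Btilde L p ℓ := by
  rw [Btilde]
  simp only [Cpg, map_sum, map_mul]
  simp only [← mul_assoc]
  rw [pull]
  refine Finset.sum_congr rfl fun j hj => ?_
  rw [Finset.mem_Icc] at hj
  congr 1
  rw [pull]
  refine Finset.sum_congr rfl fun t ht => ?_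
  rw [Finset.mem_range] at ht
  congr 1
  rw [pull]
  refine Finset.sum_congr rfl fun β hβ => ?_
  rw [Finset.mem_range] at hβ
  congr 1
  exact innermost L hj.1 hj.2 (by omega) (by omega)

/-- identity (3.7):
`Σ_{ℓ=0}^{n} B̃_{𝓛,p}^{(ℓ)}(z) = Σ_{g=0}^{⌊(p-1)/2⌋} z^{2g}
  Σ_{ℓ=n+1+2g-p}^{n} Υ_{p-1-2g}^{(ℓ)}(z) C_{p,g}^{(ℓ)}`. -/
theorem stmt17 {n : ℕ} (hn : 2 ≤ n) (L : Set (Fin n → ℤ)) {p : ℕ}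
    (hp1 : 1 ≤ p) (hpn : p ≤ n) :
    ∑ ℓ ∈ range (n+1), Btilde L p ℓ =
      ∑ g ∈ range ((p-1)/2 + 1), (X : PowerSeries ℤ)^(2*g) *
        ∑ ℓ ∈ Icc (n + 1 + 2*g - p) n,
          Upsilon L ((p : ℤ) - 1 - 2*g) ℓ * C (R := ℤ) (Cpg n p g ℓ) := by
  symm
  calc ∑ g ∈ range ((p-1)/2 + 1), (X : PowerSeries ℤ)^(2*g) *
        ∑ ℓ ∈ Icc (n + 1 + 2*g - p) n,
          Upsilon L ((p : ℤ) - 1 - 2*g) ℓ * C (R := ℤ) (Cpg n p g ℓ)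
      = ∑ g ∈ range ((p-1)/2 + 1), (X : PowerSeries ℤ)^(2*g) *
        ∑ ℓ ∈ range (n+1),
          Upsilon L ((p : ℤ) - 1 - 2*g) ℓ * C (R := ℤ) (Cpg n p g ℓ) := by
        refine Finset.sum_congr rfl fun g hg => ?_
        congr 1
        refine Finset.sum_subset ?_ ?_
        · intro ℓ hℓ
          rw [Finset.mem_Icc] at hℓ
          rw [Finset.mem_range]
          omega
        · intro ℓ hℓ hℓ'
          rw [Finset.mem_range] at hℓ
          rw [Finset.mem_Icc] at hℓ'
          rw [Upsilon_eq_zero L (by omega), zero_mul]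
    _ = ∑ g ∈ range p, (X : PowerSeries ℤ)^(2*g) *
        ∑ ℓ ∈ range (n+1),
          Upsilon L ((p : ℤ) - 1 - 2*g) ℓ * C (R := ℤ) (Cpg n p g ℓ) := by
        refine Finset.sum_subset ?_ ?_
        · intro g hg
          rw [Finset.mem_range] at *
          omega
        · intro g hg hg'
          rw [Finset.mem_range] at hg hg'
          rw [Finset.sum_eq_zero fun ℓ hℓ => ?_, mul_zero]
          rw [Finset.mem_range] at hℓ
          rw [Upsilon_eq_zero L (by omega), zero_mul]
    _ = ∑ ℓ ∈ range (n+1), ∑ g ∈ range p, (X : PowerSeries ℤ)^(2*g) *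
          (Upsilon L ((p : ℤ) - 1 - 2*g) ℓ * C (R := ℤ) (Cpg n p g ℓ)) := by
        simp only [Finset.mul_sum]
        exact Finset.sum_comm
    _ = ∑ ℓ ∈ range (n+1), Btilde L p ℓ :=
        Finset.sum_congr rfl fun ℓ _ => stepD L
end
end
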